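/- Let A = {0, 1, …, N − 1} (the integers from 0 to N − 1, N ≥ 1) and φ : A → ℝ the inclusion φ(a) = a. Assume φ is conserved by F, and assume there exists a subgroup K of X of finite index such that the quotient map X → X/K is injective on B + B. Then 2 · ∑_{w : B → A} f(w) = N^{|B|} · (N − 1). -/

import Mathlib

open scoped Pointwise

/-- The cellular automaton induced by a local rule `f` on neighbourhood `B`. -/
def induce {X A : Type*} [AddCommGroup X] (B : Finset X) (f : (B → A) → A)
    (a : X → A) : X → A :=
  fun x => f fun b => a (x + b.1)

/-- `ψ` is conserved by the CA induced by `f` on `B`. -/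
def conserved {X A Z : Type*} [AddCommGroup X] [AddCommMonoid Z] (B : Finset X)
    (f : (B → A) → A) (ψ : A → Z) : Prop :=
  (∃ a : A, ψ a = 0) ∧
  (∀ a : X → A, (Function.support fun x => ψ (a x)).Finite →
      (Function.support fun x => ψ (induce B f a x)).Finite) ∧
  (∀ a : X → A, (Function.support fun x => ψ (a x)).Finite →
      ∑ᶠ x, ψ (induce B f a x) = ∑ᶠ x, ψ (a x))

set_option linter.unusedSectionVars false

section aux

variable {X : Type*} [AddCommGroup X] [DecidableEq X] {N : ℕ} [NeZero N]

/-- extension by zero of a configuration on `S` -/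
def extS (S : Finset X) (a : S → Fin N) : X → Fin N :=
  fun x => if h : x ∈ S then a ⟨x, h⟩ else 0

def phiR (c : Fin N) : ℝ := ((c : ℕ) : ℝ)

lemma vac_zero (B : Finset X) (f : (B → Fin N) → Fin N)
    (hcons : conserved B f (fun a : Fin N => ((a : ℕ) : ℝ))) :
    phiR (f (fun _ => 0)) = 0 := by
  set c : Fin N := f (fun _ => 0) with hc
  show ((c : ℕ) : ℝ) = 0
  by_contra hne
  have h0 : (Function.support fun x : X => (((fun _ : X => (0 : Fin N)) x : ℕ) : ℝ)).Finite := by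
    simp [Function.support]
  have hind : (induce B f (fun _ : X => (0 : Fin N))) = fun _ : X => c := rfl
  have h1 := hcons.2.1 (fun _ => 0) h0
  rw [hind] at h1
  have hsupp : (Function.support fun _ : X => ((c : ℕ) : ℝ)) = Set.univ := by
    ext x; simp [Function.support, hne]
  rw [hsupp] at h1
  have : Finite X := Set.finite_univ_iff.mp h1
  have h2 := hcons.2.2 (fun _ => 0) h0
  rw [hind] at h2
  have hXf : Fintype X := Fintype.ofFinite X
  rw [finsum_eq_sum_of_fintype, finsum_eq_sum_of_fintype] at h2
  simp only [Finset.sum_const, Fin.val_zero, Nat.cast_zero, Finset.sum_const_zero,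
    smul_eq_mul, smul_zero, nsmul_eq_mul, Finset.card_univ] at h2
  rcases mul_eq_zero.mp h2 with h | h
  · exact absurd (Nat.cast_eq_zero.mp h) Fintype.card_ne_zero
  · exact hne h

lemma cons_inst (B : Finset X) (hB0 : (0:X) ∈ B) (hBsym : ∀ b : X, b ∈ B ↔ -b ∈ B)
    (f : (B → Fin N) → Fin N)
    (hcons : conserved B f (fun a : Fin N => ((a : ℕ) : ℝ)))
    (hvac : phiR (f (fun _ => 0)) = 0)
    (S : Finset X) (a : S → Fin N) :
    ∑ x ∈ S + B, phiR (f (fun b => extS S a (x + b.1)))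
      = ∑ x ∈ S, phiR (extS S a x) := by
  have hz : phiR (0 : Fin N) = 0 := by simp [phiR]
  have hsupp : (Function.support fun x : X => phiR (extS S a x)) ⊆ ↑S := by
    intro x hx
    by_contra hxS
    apply hx
    have hxS' : x ∉ S := fun h => hxS (Finset.mem_coe.mpr h)
    show phiR (extS S a x) = 0
    rw [extS, dif_neg hxS', hz]
  have hfin : (Function.support fun x : X => phiR (extS S a x)).Finite :=
    Set.Finite.subset S.finite_toSet hsupp
  have h2 := hcons.2.2 (extS S a) hfin
  have hkey : ∀ x : X, phiR (induce B f (extS S a) x) = phiR (f (fun b => extS S a (x + b.1))) :=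
    fun x => rfl
  have hsuppF : (Function.support fun x : X => phiR (induce B f (extS S a) x)) ⊆ ↑(S + B) := by
    intro x hx
    by_contra hxSB
    apply hx
    have hword : (fun b : B => extS S a (x + b.1)) = fun _ => 0 := by
      funext b
      have hns : x + b.1 ∉ S := by
        intro hmem
        exact hxSB (Finset.mem_coe.mpr (Finset.mem_add.mpr
          ⟨x + b.1, hmem, -b.1, (hBsym b.1).mp b.2, by abel⟩))
      rw [extS, dif_neg hns]
    show phiR (induce B f (extS S a) x) = 0
    rw [hkey, hword]
    exact hvac
  have h2' : ∑ᶠ x, phiR (induce B f (extS S a) x) = ∑ᶠ x, phiR (extS S a x) := h2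
  rw [finsum_eq_sum_of_support_subset _ hsuppF, finsum_eq_sum_of_support_subset _ hsupp] at h2'
  calc ∑ x ∈ S + B, phiR (f (fun b => extS S a (x + b.1)))
      = ∑ x ∈ S + B, phiR (induce B f (extS S a) x) := by
        refine Finset.sum_congr rfl fun x _ => (hkey x).symm
    _ = ∑ x ∈ S, phiR (extS S a x) := h2'

/-- masked word -/
def maskS (S B : Finset X) (x : X) (u : B → Fin N) : B → Fin N :=
  fun b => if x + b.1 ∈ S then u b else 0

/-- the swap involution -/
def swapSB (S B : Finset X) (x : X) (p : (S → Fin N) × (B → Fin N)) :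
    (S → Fin N) × (B → Fin N) :=
  ⟨fun s => if h : s.1 - x ∈ B then p.2 ⟨s.1 - x, h⟩ else p.1 s,
   fun b => if h : x + b.1 ∈ S then p.1 ⟨x + b.1, h⟩ else p.2 b⟩

lemma swapSB_invol (S B : Finset X) (x : X) :
    Function.Involutive (swapSB (N := N) S B x) := by
  intro p
  unfold swapSB
  apply Prod.ext
  · funext s
    by_cases h : (s : X) - x ∈ B
    · have e : x + ((s : X) - x) = (s : X) := by abel
      simp only [dif_pos h, e, dif_pos s.2, Subtype.coe_eta]
    · simp only [dif_neg h]
  · funext b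
    by_cases h : x + (b : X) ∈ S
    · have e : x + (b : X) - x = (b : X) := by abel
      simp only [dif_pos h, e, dif_pos b.2, Subtype.coe_eta]
    · simp only [dif_neg h]

lemma L3 (S B : Finset X) (f : (B → Fin N) → Fin N) (x : X) :
    (N:ℝ) ^ B.card * ∑ a : (S → Fin N), phiR (f (fun b => extS S a (x + b.1)))
      = (N:ℝ) ^ S.card * ∑ u : (B → Fin N), phiR (f (maskS S B x u)) := by
  classical
  have hcardB : (Fintype.card (B → Fin N) : ℝ) = (N:ℝ) ^ B.card := by
    rw [Fintype.card_fun, Fintype.card_fin, Fintype.card_coe]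
    push_cast
    ring
  have hcardS : (Fintype.card (S → Fin N) : ℝ) = (N:ℝ) ^ S.card := by
    rw [Fintype.card_fun, Fintype.card_fin, Fintype.card_coe]
    push_cast
    ring
  have h1 : ∑ p : (S → Fin N) × (B → Fin N), phiR (f (fun b => extS S p.1 (x + b.1)))
      = (N:ℝ) ^ B.card * ∑ a : (S → Fin N), phiR (f (fun b => extS S a (x + b.1))) := by
    rw [Fintype.sum_prod_type]
    simp only [Finset.sum_const, Finset.card_univ, nsmul_eq_mul]
    rw [← Finset.mul_sum, hcardB]
  have h3 : ∑ p : (S → Fin N) × (B → Fin N), phiR (f (maskS S B x p.2))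
      = (N:ℝ) ^ S.card * ∑ u : (B → Fin N), phiR (f (maskS S B x u)) := by
    rw [Fintype.sum_prod_type]
    simp only [Finset.sum_const, Finset.card_univ, nsmul_eq_mul]
    rw [← hcardS]
  have h2 : ∑ p : (S → Fin N) × (B → Fin N), phiR (f (fun b => extS S p.1 (x + b.1)))
      = ∑ p : (S → Fin N) × (B → Fin N), phiR (f (maskS S B x p.2)) := by
    refine Fintype.sum_bijective _ (swapSB_invol (N := N) S B x).bijective _ _ ?_
    intro p
    congr 1
    congr 1
    funext b
    by_cases hb : x + (b : X) ∈ S <;>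
      simp [extS, maskS, swapSB, hb]
  rw [← h1, h2, h3]

lemma L4 (S : Finset X) (s : X) (hs : s ∈ S) :
    (N:ℝ) * ∑ a : (S → Fin N), phiR (extS S a s)
      = (N:ℝ) ^ S.card * (∑ c : Fin N, phiR c) := by
  classical
  have hcardS : (Fintype.card (S → Fin N) : ℝ) = (N:ℝ) ^ S.card := by
    rw [Fintype.card_fun, Fintype.card_fin, Fintype.card_coe]; push_cast; ring
  set s0 : {x // x ∈ S} := ⟨s, hs⟩
  have hext : ∀ a : S → Fin N, extS S a s = a s0 := fun a => dif_pos hs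
  have hl : ∑ p : (S → Fin N) × Fin N, phiR (p.1 s0)
      = (N:ℝ) * ∑ a : (S → Fin N), phiR (extS S a s) := by
    rw [Fintype.sum_prod_type]
    simp only [Finset.sum_const, Finset.card_univ, Fintype.card_fin, nsmul_eq_mul]
    rw [← Finset.mul_sum]
    congr 1
    exact Finset.sum_congr rfl fun a _ => by rw [hext]
  have hr : ∑ p : (S → Fin N) × Fin N, phiR p.2
      = (N:ℝ) ^ S.card * (∑ c : Fin N, phiR c) := by
    rw [Fintype.sum_prod_type]
    simp only [Finset.sum_const, Finset.card_univ, nsmul_eq_mul]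
    rw [← hcardS]
  have hinv : Function.Involutive
      (fun p : (S → Fin N) × Fin N => (Function.update p.1 s0 p.2, p.1 s0)) := by
    intro p
    simp [Function.update_idem, Function.update_self, Function.update_eq_self]
  have hmid : ∑ p : (S → Fin N) × Fin N, phiR (p.1 s0)
      = ∑ p : (S → Fin N) × Fin N, phiR p.2 := by
    refine Fintype.sum_bijective _ hinv.bijective _ _ ?_
    intro p
    simp [Function.update_self]
  rw [← hl, hmid, hr]

lemma identI (B : Finset X) (hB0 : (0:X) ∈ B) (hBsym : ∀ b : X, b ∈ B ↔ -b ∈ B)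
    (f : (B → Fin N) → Fin N)
    (hcons : conserved B f (fun a : Fin N => ((a : ℕ) : ℝ)))
    (hvac : phiR (f (fun _ => 0)) = 0) (S : Finset X) :
    (N:ℝ) * ∑ x ∈ S + B, (∑ u : (B → Fin N), phiR (f (maskS S B x u)))
      = (N:ℝ) ^ B.card * S.card * (∑ c : Fin N, phiR c) := by
  classical
  have hNR : (N:ℝ) ≠ 0 := Nat.cast_ne_zero.mpr (NeZero.ne N)
  have base : ∑ x ∈ S + B, ∑ a : (S → Fin N), phiR (f (fun b => extS S a (x + b.1)))
      = ∑ x ∈ S, ∑ a : (S → Fin N), phiR (extS S a x) := by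
    calc ∑ x ∈ S + B, ∑ a : (S → Fin N), phiR (f (fun b => extS S a (x + b.1)))
        = ∑ a : (S → Fin N), ∑ x ∈ S + B, phiR (f (fun b => extS S a (x + b.1))) :=
          Finset.sum_comm
      _ = ∑ a : (S → Fin N), ∑ x ∈ S, phiR (extS S a x) :=
          Finset.sum_congr rfl fun a _ => cons_inst B hB0 hBsym f hcons hvac S a
      _ = ∑ x ∈ S, ∑ a : (S → Fin N), phiR (extS S a x) := Finset.sum_comm
  apply mul_left_cancel₀ (pow_ne_zero S.card hNR)
  calc (N:ℝ) ^ S.card * ((N:ℝ) * ∑ x ∈ S + B, (∑ u : (B → Fin N), phiR (f (maskS S B x u))))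
      = (N:ℝ) * ∑ x ∈ S + B, ((N:ℝ) ^ S.card * ∑ u : (B → Fin N), phiR (f (maskS S B x u))) := by
        simp only [← Finset.mul_sum]; ring
    _ = (N:ℝ) * ∑ x ∈ S + B, ((N:ℝ) ^ B.card * ∑ a : (S → Fin N), phiR (f (fun b => extS S a (x + b.1)))) := by
        congr 1
        exact Finset.sum_congr rfl fun x _ => (L3 S B f x).symm
    _ = (N:ℝ) * ((N:ℝ) ^ B.card * ∑ x ∈ S + B, ∑ a : (S → Fin N), phiR (f (fun b => extS S a (x + b.1)))) := by
        simp only [← Finset.mul_sum]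
    _ = (N:ℝ) * ((N:ℝ) ^ B.card * ∑ x ∈ S, ∑ a : (S → Fin N), phiR (extS S a x)) := by
        rw [base]
    _ = (N:ℝ) ^ B.card * ∑ x ∈ S, ((N:ℝ) * ∑ a : (S → Fin N), phiR (extS S a x)) := by
        simp only [← Finset.mul_sum]; ring
    _ = (N:ℝ) ^ B.card * ∑ x ∈ S, ((N:ℝ) ^ S.card * (∑ c : Fin N, phiR c)) := by
        congr 1
        exact Finset.sum_congr rfl fun x hx => L4 S x hx
    _ = (N:ℝ) ^ S.card * ((N:ℝ) ^ B.card * S.card * (∑ c : Fin N, phiR c)) := by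
        rw [Finset.sum_const, nsmul_eq_mul]
        ring

/-- boxes built from `B`-coefficients -/
def folner (B : Finset X) (m : ℕ) : Finset X :=
  Finset.image (fun a : (B → Fin m) => ∑ b : B, (a b : ℕ) • (b : X)) Finset.univ

lemma folner_card_le (B : Finset X) (m : ℕ) : (folner B m).card ≤ m ^ B.card := by
  refine le_trans (Finset.card_image_le) ?_
  rw [Finset.card_univ, Fintype.card_fun, Fintype.card_fin, Fintype.card_coe]

lemma folner_bump (B : Finset X) (m : ℕ) (b0 : B) {x : X} (hx : x ∈ folner B m) :
    x + (b0 : X) ∈ folner B (m+1) := by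
  classical
  rcases Finset.mem_image.mp hx with ⟨a, -, rfl⟩
  refine Finset.mem_image.mpr ⟨fun b => if b = b0 then ⟨(a b : ℕ) + 1, by omega⟩
    else ⟨(a b : ℕ), by omega⟩, Finset.mem_univ _, ?_⟩
  have key : (fun b : B => ((if b = b0 then (⟨(a b : ℕ) + 1, by omega⟩ : Fin (m+1))
      else ⟨(a b : ℕ), by omega⟩ : Fin (m+1)) : ℕ) • (b : X))
      = fun b : B => (a b : ℕ) • (b : X) + (if b = b0 then (b : X) else 0) := by
    funext b
    by_cases hb : b = b0
    · simp only [hb, if_pos]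
      rw [add_nsmul, one_nsmul]
    · simp only [hb, if_neg, not_false_iff, add_zero]
  rw [key, Finset.sum_add_distrib, Finset.sum_ite_eq' Finset.univ b0 (fun b : B => (b : X)),
    if_pos (Finset.mem_univ b0)]

lemma folner_zero_mem (B : Finset X) (hB0 : (0:X) ∈ B) (m : ℕ) : (0:X) ∈ folner B (m+1) := by
  classical
  refine Finset.mem_image.mpr ⟨fun _ => ⟨0, by omega⟩, Finset.mem_univ _, ?_⟩
  simp

lemma folner_mono (B : Finset X) (hB0 : (0:X) ∈ B) (m : ℕ) {x : X} (hx : x ∈ folner B m) :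
    x ∈ folner B (m+1) := by
  have := folner_bump B m ⟨0, hB0⟩ hx
  simpa using this

lemma folner_add_subset (B : Finset X) (m : ℕ) :
    folner B m + B ⊆ folner B (m+1) := by
  intro x hx
  rcases Finset.mem_add.mp hx with ⟨y, hy, b, hb, rfl⟩
  exact folner_bump B m ⟨b, hb⟩ hy

lemma folner_growth (B : Finset X) (hB0 : (0:X) ∈ B) (ε : ℝ) (hε : 0 < ε) :
    ∃ m : ℕ, 1 ≤ m ∧ ((folner B (m+2)).card : ℝ) ≤ (1+ε) * ((folner B m).card : ℝ) := by
  by_contra hcon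
  push_neg at hcon
  have hstep : ∀ k : ℕ, (1+ε) ^ k ≤ ((folner B (2*k+1)).card : ℝ) := by
    intro k
    induction k with
    | zero =>
      simp only [pow_zero]
      have h0 : (0:X) ∈ folner B 1 := folner_zero_mem B hB0 0
      have : 1 ≤ (folner B (2*0+1)).card := Finset.card_pos.mpr ⟨0, by simpa using h0⟩
      exact_mod_cast this
    | succ k ih =>
      have h1 : 1 ≤ 2*k+1 := by omega
      have h2 := hcon (2*k+1) h1
      have h3 : (1+ε) * ((folner B (2*k+1)).card : ℝ) < ((folner B (2*k+1+2)).card : ℝ) := h2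
      have h4 : (1+ε)^(k+1) = (1+ε) * (1+ε)^k := by ring
      rw [h4]
      calc (1+ε) * (1+ε)^k ≤ (1+ε) * ((folner B (2*k+1)).card : ℝ) := by
            apply mul_le_mul_of_nonneg_left ih (by linarith)
        _ ≤ ((folner B (2*(k+1)+1)).card : ℝ) := by
            rw [show 2*(k+1)+1 = 2*k+1+2 by ring]
            exact le_of_lt h3
  -- exponential beats polynomial
  set s := B.card
  have hr : ‖(1+ε)⁻¹‖ < 1 := by
    rw [Real.norm_eq_abs, abs_of_pos (by positivity)]
    rw [inv_lt_one_iff₀]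
    right; linarith
  have hsum := summable_pow_mul_geometric_of_norm_lt_one (R := ℝ) s hr
  have htend := hsum.tendsto_atTop_zero
  have hev : ∀ᶠ k : ℕ in Filter.atTop, (k:ℝ)^s * ((1+ε)⁻¹)^k < (((3:ℝ)^s)⁻¹) :=
    htend.eventually_lt_const (by positivity)
  rcases (hev.and (Filter.eventually_ge_atTop 1)).exists with ⟨k, hk, hk1⟩
  have hk1' : (1:ℝ) ≤ (k:ℝ) := by exact_mod_cast hk1
  have hcard : ((folner B (2*k+1)).card : ℝ) ≤ ((2*k+1 : ℝ))^s := by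
    have h := folner_card_le B (2*k+1)
    calc ((folner B (2*k+1)).card : ℝ) ≤ (((2*k+1)^s : ℕ) : ℝ) := by exact_mod_cast h
      _ = ((2*k+1 : ℝ))^s := by push_cast; ring
  have h3k : ((2*k+1 : ℝ)) ≤ 3 * (k:ℝ) := by push_cast; linarith
  have hb : ((2*k+1:ℝ))^s ≤ (3:ℝ)^s * (k:ℝ)^s := by
    rw [← mul_pow]
    exact pow_le_pow_left₀ (by positivity) h3k s
  have hpos : (0:ℝ) < (1+ε)^k := by positivity
  have h3pos : (0:ℝ) < (3:ℝ)^s := by positivity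
  have hkey : (3:ℝ)^s * (k:ℝ)^s < (1+ε)^k := by
    rw [inv_pow] at hk
    have h2 : (k:ℝ)^s < ((3:ℝ)^s)⁻¹ * (1+ε)^k := by
      have h := mul_lt_mul_of_pos_right hk hpos
      rwa [mul_assoc, inv_mul_cancel₀ (ne_of_gt hpos), mul_one] at h
    have h3 := mul_lt_mul_of_pos_left h2 h3pos
    rwa [← mul_assoc, mul_inv_cancel₀ (ne_of_gt h3pos), one_mul] at h3
  have hfin := hstep k
  linarith

lemma bound_sum (B : Finset X) (F : (B → Fin N) → Fin N) :
    |∑ u : (B → Fin N), phiR (F u)| ≤ (N:ℝ) ^ B.card * ((N:ℝ) - 1) := by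
  classical
  have h1 : ∀ u : (B → Fin N), phiR (F u) ≤ (N:ℝ) - 1 := by
    intro u
    have h2 : ((F u : ℕ) : ℝ) + 1 ≤ (N:ℝ) := by
      have := (F u).isLt
      exact_mod_cast Nat.succ_le_of_lt this
    show ((F u : ℕ) : ℝ) ≤ (N:ℝ) - 1
    linarith
  have h0 : ∀ u : (B → Fin N), 0 ≤ phiR (F u) := fun u => Nat.cast_nonneg _
  rw [abs_of_nonneg (Finset.sum_nonneg fun u _ => h0 u)]
  calc ∑ u : (B → Fin N), phiR (F u)
      ≤ Finset.univ.card • ((N:ℝ) - 1) :=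
        Finset.sum_le_card_nsmul _ _ _ (fun u _ => h1 u)
    _ = (N:ℝ) ^ B.card * ((N:ℝ) - 1) := by
        rw [Finset.card_univ, Fintype.card_fun, Fintype.card_fin, Fintype.card_coe,
          nsmul_eq_mul]
        push_cast
        ring

lemma main_est (B : Finset X) (hB0 : (0:X) ∈ B) (hBsym : ∀ b : X, b ∈ B ↔ -b ∈ B)
    (f : (B → Fin N) → Fin N)
    (hcons : conserved B f (fun a : Fin N => ((a : ℕ) : ℝ)))
    (hvac : phiR (f (fun _ => 0)) = 0) :
    (N:ℝ) * (∑ u : (B → Fin N), phiR (f u))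
      = (N:ℝ) ^ B.card * (∑ c : Fin N, phiR c) := by
  classical
  have hN1 : (1:ℝ) ≤ (N:ℝ) := by
    have := Nat.one_le_iff_ne_zero.mpr (NeZero.ne N)
    exact_mod_cast this
  set Mu := ∑ u : (B → Fin N), phiR (f u) with hMu
  set sig := ∑ c : Fin N, phiR c with hsig
  set C := (N:ℝ) ^ B.card * ((N:ℝ) - 1) with hCdef
  have hC0 : 0 ≤ C := by
    apply mul_nonneg (by positivity)
    linarith
  set D := (N:ℝ) * Mu - (N:ℝ) ^ B.card * sig with hDdef
  set K := 2 * (N:ℝ) * C with hKdef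
  have hK0 : 0 ≤ K := by
    apply mul_nonneg (by linarith) hC0
  have hMuC : |Mu| ≤ C := bound_sum B f
  have hest : ∀ ε : ℝ, 0 < ε → |D| ≤ ε * K := by
    intro ε hε
    obtain ⟨m, hm1, hgrow⟩ := folner_growth B hB0 ε hε
    obtain ⟨m', rfl⟩ : ∃ m', m = m' + 1 := ⟨m - 1, by omega⟩
    set m := m' + 1
    set S := folner B (m+1) with hSdef
    set p : X → Prop := fun x => ∀ b ∈ B, x + b ∈ S with hp
    set G := (S + B).filter p with hGdef
    have hFmS : folner B m ⊆ S := fun x hx => folner_mono B hB0 m hx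
    have hSB2 : S + B ⊆ folner B (m+2) := folner_add_subset B (m+1)
    have hFmG : folner B m ⊆ G := by
      intro x hx
      refine Finset.mem_filter.mpr ⟨?_, ?_⟩
      · exact Finset.mem_add.mpr ⟨x, hFmS hx, 0, hB0, add_zero x⟩
      · intro b hb
        exact folner_bump B m ⟨b, hb⟩ hx
    have hGS : G ⊆ S := by
      intro x hx
      have h2 := (Finset.mem_filter.mp hx).2 0 hB0
      rwa [add_zero] at h2
    have hSsub : S ⊆ S + B := fun x hx => Finset.mem_add.mpr ⟨x, hx, 0, hB0, add_zero x⟩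
    have hGsub : G ⊆ S + B := Finset.filter_subset _ _
    set fm := ((folner B m).card : ℝ) with hfm
    set fm2 := ((folner B (m+2)).card : ℝ) with hfm2
    set sc := ((S.card : ℕ) : ℝ) with hsc
    set gc := ((G.card : ℕ) : ℝ) with hgc
    set sb := (((S+B).card : ℕ) : ℝ) with hsb
    have c1 : fm ≤ gc := by rw [hfm, hgc]; exact_mod_cast Finset.card_le_card hFmG
    have c2 : gc ≤ sc := by rw [hgc, hsc]; exact_mod_cast Finset.card_le_card hGS
    have c3 : sc ≤ fm2 := by
      rw [hsc, hfm2]; exact_mod_cast Finset.card_le_card (Finset.Subset.trans hSsub hSB2)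
    have c4 : sb ≤ fm2 := by rw [hsb, hfm2]; exact_mod_cast Finset.card_le_card hSB2
    have c5 : (1:ℝ) ≤ fm := by
      have h0 : (0:X) ∈ folner B m := folner_zero_mem B hB0 m'
      have h1 : 1 ≤ (folner B m).card := Finset.card_pos.mpr ⟨0, h0⟩
      rw [hfm]; exact_mod_cast h1
    have hfmsc : fm ≤ sc := by rw [hfm, hsc]; exact_mod_cast Finset.card_le_card hFmS
    have hgrow' : fm2 ≤ (1+ε) * fm := hgrow
    -- split the sum
    have hint : ∀ x ∈ G, (∑ u : (B → Fin N), phiR (f (maskS S B x u))) = Mu := by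
      intro x hx
      refine Finset.sum_congr rfl fun u _ => ?_
      have hmask : maskS S B x u = u := by
        funext b
        exact if_pos ((Finset.mem_filter.mp hx).2 b.1 b.2)
      rw [hmask]
    have hGsum : ∑ x ∈ G, (∑ u : (B → Fin N), phiR (f (maskS S B x u))) = gc * Mu := by
      rw [Finset.sum_congr rfl hint, Finset.sum_const, nsmul_eq_mul]
    set R := ∑ x ∈ (S+B).filter (fun x => ¬ p x),
      (∑ u : (B → Fin N), phiR (f (maskS S B x u))) with hRdef
    have hsplit : ∑ x ∈ S + B, (∑ u : (B → Fin N), phiR (f (maskS S B x u)))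
        = gc * Mu + R := by
      rw [← Finset.sum_filter_add_sum_filter_not (S+B) p, ← hGdef, hGsum]
    have hcards : G.card + ((S+B).filter (fun x => ¬ p x)).card = (S+B).card := by
      rw [hGdef]
      exact Finset.card_filter_add_card_filter_not _
    have hnegcard : (((S+B).filter (fun x => ¬ p x)).card : ℝ) = sb - gc := by
      rw [hsb, hgc, ← hcards]
      push_cast
      ring
    have hRbound : |R| ≤ (sb - gc) * C := by
      calc |R| ≤ ∑ x ∈ (S+B).filter (fun x => ¬ p x),
            |∑ u : (B → Fin N), phiR (f (maskS S B x u))| := Finset.abs_sum_le_sum_abs _ _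
        _ ≤ ∑ x ∈ (S+B).filter (fun x => ¬ p x), C :=
            Finset.sum_le_sum fun x _ => bound_sum B (fun u => f (maskS S B x u))
        _ = (((S+B).filter (fun x => ¬ p x)).card : ℝ) * C := by
            rw [Finset.sum_const, nsmul_eq_mul]
        _ = (sb - gc) * C := by rw [hnegcard]
    have hiden := identI B hB0 hBsym f hcons hvac S
    have hiden' : (N:ℝ) * (gc * Mu + R) = (N:ℝ) ^ B.card * sc * sig := by
      rw [← hsplit]
      exact hiden
    have hDS : D * sc = (N:ℝ) * ((sc - gc) * Mu - R) := by
      have e : D * sc = (N:ℝ)*Mu*sc - ((N:ℝ) ^ B.card * sc * sig) := by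
        rw [hDdef]; ring
      rw [e, ← hiden']
      ring
    have e1 : sc - gc ≤ ε * sc := by
      have h1 : sc - gc ≤ fm2 - fm := by linarith
      have h2 : fm2 - fm ≤ ε * fm := by linarith
      have h3 : ε * fm ≤ ε * sc := mul_le_mul_of_nonneg_left hfmsc hε.le
      linarith
    have e2 : sb - gc ≤ ε * sc := by
      have h1 : sb - gc ≤ fm2 - fm := by linarith
      have h2 : fm2 - fm ≤ ε * fm := by linarith
      have h3 : ε * fm ≤ ε * sc := mul_le_mul_of_nonneg_left hfmsc hε.le
      linarith
    have hscpos : (0:ℝ) < sc := by linarith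
    have habs : |D| * sc ≤ (ε * K) * sc := by
      have h1 : |D| * sc = |D * sc| := by
        rw [abs_mul, abs_of_nonneg hscpos.le]
      rw [h1, hDS, abs_mul]
      have h2 : |(sc - gc) * Mu - R| ≤ (sc - gc) * |Mu| + |R| := by
        calc |(sc - gc) * Mu - R| ≤ |(sc - gc) * Mu| + |R| := abs_sub _ _
          _ = |sc - gc| * |Mu| + |R| := by rw [abs_mul]
          _ = (sc - gc) * |Mu| + |R| := by rw [abs_of_nonneg (by linarith)]
      have h3 : (sc - gc) * |Mu| ≤ (ε * sc) * C := by
        have := mul_le_mul e1 hMuC (abs_nonneg Mu) (mul_nonneg hε.le hscpos.le)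
        linarith [this]
      have h4 : |R| ≤ (ε * sc) * C := by
        have := mul_le_mul_of_nonneg_right e2 hC0
        linarith
      have h5 : |(N:ℝ)| = (N:ℝ) := abs_of_nonneg (by linarith)
      rw [h5]
      calc (N:ℝ) * |(sc - gc) * Mu - R| ≤ (N:ℝ) * ((ε * sc) * C + (ε * sc) * C) := by
            apply mul_le_mul_of_nonneg_left _ (by linarith)
            linarith
        _ = (ε * K) * sc := by rw [hKdef]; ring
    exact le_of_mul_le_mul_right habs hscpos
  -- conclude D = 0
  have hD0 : D = 0 := by
    have habs : ∀ δ : ℝ, 0 < δ → |D| ≤ δ := by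
      intro δ hδ
      have h1 := hest (δ / (K + 1)) (by positivity)
      calc |D| ≤ (δ / (K + 1)) * K := h1
        _ = δ * K / (K + 1) := by ring
        _ ≤ δ := by
            rw [div_le_iff₀ (by linarith)]
            nlinarith
    have h2 : |D| ≤ 0 := by
      refine le_of_forall_pos_le_add ?_
      intro δ hδ
      have := habs δ hδ
      linarith
    have := abs_nonneg D
    exact abs_eq_zero.mp (le_antisymm h2 this)
  rw [hDdef] at hD0
  linarith [hD0]

end aux

theorem stmt13 {X : Type*} [AddCommGroup X] [DecidableEq X]
    (N : ℕ) (hN : 1 ≤ N)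
    (B : Finset X) (hB0 : (0 : X) ∈ B) (hBsym : ∀ b : X, b ∈ B ↔ -b ∈ B)
    (f : (B → Fin N) → Fin N)
    (hcons : conserved B f (fun a : Fin N => ((a : ℕ) : ℝ)))
    (hquot : ∃ K : AddSubgroup X, AddSubgroup.FiniteIndex K ∧
      Set.InjOn (QuotientAddGroup.mk' K) ((B : Set X) + (B : Set X))) :
    2 * (∑ w : B → Fin N, ((f w : ℕ))) = N ^ B.card * (N - 1) := by
  haveI : NeZero N := ⟨Nat.one_le_iff_ne_zero.mp hN⟩
  have hvac : phiR (f (fun _ => 0)) = 0 := vac_zero B f hcons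
  have hmain := main_est B hB0 hBsym f hcons hvac
  have hNne : (N:ℝ) ≠ 0 := Nat.cast_ne_zero.mpr (NeZero.ne N)
  -- Gauss sum
  have hsig : (2:ℝ) * (∑ c : Fin N, phiR c) = (N:ℝ) * ((N:ℝ) - 1) := by
    have h1 : ∑ c : Fin N, phiR c = ∑ i ∈ Finset.range N, (i:ℝ) :=
      Fin.sum_univ_eq_sum_range (fun i => (i:ℝ)) N
    have h2 : (∑ i ∈ Finset.range N, (i:ℝ)) = ((∑ i ∈ Finset.range N, i : ℕ) : ℝ) := by
      push_cast
      rfl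
    have h3 : (∑ i ∈ Finset.range N, i) * 2 = N * (N - 1) := Finset.sum_range_id_mul_two N
    have h4 : (((∑ i ∈ Finset.range N, i) * 2 : ℕ) : ℝ) = ((N * (N-1) : ℕ) : ℝ) := by
      exact_mod_cast congrArg (Nat.cast : ℕ → ℝ) h3
    rw [h1, h2]
    push_cast [Nat.cast_sub hN] at h4 ⊢
    linarith
  have hMucast : ((∑ w : B → Fin N, ((f w : ℕ)) : ℕ) : ℝ)
      = ∑ u : (B → Fin N), phiR (f u) := by
    push_cast
    rfl
  have hmain2 : (N:ℝ) * (2 * ∑ u : (B → Fin N), phiR (f u))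
      = (N:ℝ) * ((N:ℝ) ^ B.card * ((N:ℝ) - 1)) := by
    calc (N:ℝ) * (2 * ∑ u : (B → Fin N), phiR (f u))
        = 2 * ((N:ℝ) * ∑ u : (B → Fin N), phiR (f u)) := by ring
      _ = 2 * ((N:ℝ) ^ B.card * ∑ c : Fin N, phiR c) := by rw [hmain]
      _ = (N:ℝ) ^ B.card * (2 * ∑ c : Fin N, phiR c) := by ring
      _ = (N:ℝ) ^ B.card * ((N:ℝ) * ((N:ℝ) - 1)) := by rw [hsig]
      _ = (N:ℝ) * ((N:ℝ) ^ B.card * ((N:ℝ) - 1)) := by ring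
  have target_r : (N:ℝ) * ((2 * (∑ w : B → Fin N, ((f w : ℕ))) : ℕ) : ℝ)
      = (N:ℝ) * ((N ^ B.card * (N - 1) : ℕ) : ℝ) := by
    push_cast [Nat.cast_sub hN]
    simp only [phiR] at hmain2
    linarith [hmain2]
  have := mul_left_cancel₀ hNne target_r
  exact_mod_cast this
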